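/- The variance of the balanced IPS estimator is no larger than that of the naive IPS estimator: Var(R̂_bal(h)) ≤ Var(R̂_naive(h)), where both are computed over the multi-logger sampling distribution x_i^j ~ P, y_i^j ~ h_j(·|x_i^j), assuming the ratio h/h_j is well-defined for all j. -/

import Mathlib

open MeasureTheory ProbabilityTheory
open scoped NNReal ENNReal

set_option maxHeartbeats 2000000 in
/-- The balanced IPS estimator has variance no larger than the naive IPS estimator:
`Var(R̂_bal(h)) ≤ Var(R̂_naive(h))` over the multi-logger sampling distribution
`x_i^j ~ P`, `y_i^j ~ h_j(·|x_i^j)`, where `h_avg = (Σ_j n_j h_j)/n`. -/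
theorem balanced_ips_variance_le_naive {X Y Ω : Type*} [MeasurableSpace X]
    [MeasurableSpace Y] [MeasurableSpace Ω]
    (μ : Measure X) (ν : Measure Y) [SigmaFinite μ] [SigmaFinite ν]
    (μΩ : Measure Ω) [IsProbabilityMeasure μΩ]
    (J : ℕ) (nvec : Fin J → ℕ) (hn : 0 < ∑ j, nvec j)
    (Z : (j : Fin J) → Fin (nvec j) → Ω → X × Y)
    (Pd : X → ℝ) (h : X → Y → ℝ) (hj : Fin J → X → Y → ℝ) (havg : X → Y → ℝ)
    (δ : X × Y → ℝ) (L : ℝ)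
    (havg_def : ∀ x y, havg x y = (∑ j, (nvec j : ℝ) * hj j x y) / (∑ j, (nvec j : ℝ)))
    (hP_nonneg : ∀ x, 0 ≤ Pd x) (hP_density : ∫ x, Pd x ∂μ = 1) (hP_meas : Measurable Pd)
    (hh_nonneg : ∀ x y, 0 ≤ h x y) (hh_density : ∀ x, ∫ y, h x y ∂ν = 1)
    (hh_meas : Measurable fun z : X × Y => h z.1 z.2)
    (hj_pos : ∀ j x y, 0 < hj j x y) (hj_density : ∀ j x, ∫ y, hj j x y ∂ν = 1)
    (hj_meas : ∀ j, Measurable fun z : X × Y => hj j z.1 z.2)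
    (hδ : ∀ z, δ z ∈ Set.Icc (0 : ℝ) L) (hδ_meas : Measurable δ)
    (hZ_meas : ∀ j i, Measurable (Z j i))
    (hlaw : ∀ j i, Measure.map (Z j i) μΩ
      = (μ.prod ν).withDensity fun z => ENNReal.ofReal (hj j z.1 z.2 * Pd z.1))
    (hind : iIndepFun
      (fun p : (j : Fin J) × Fin (nvec j) => Z p.1 p.2) μΩ)
    (hL2_bal : MemLp (fun ω => (1 / (∑ j, (nvec j : ℝ))) * ∑ j, ∑ i,
        h (Z j i ω).1 (Z j i ω).2 / havg (Z j i ω).1 (Z j i ω).2 * δ (Z j i ω)) 2 μΩ)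
    (hL2_naive : MemLp (fun ω => (1 / (∑ j, (nvec j : ℝ))) * ∑ j, ∑ i,
        h (Z j i ω).1 (Z j i ω).2 / hj j (Z j i ω).1 (Z j i ω).2 * δ (Z j i ω)) 2 μΩ) :
    variance (fun ω => (1 / (∑ j, (nvec j : ℝ))) * ∑ j, ∑ i,
        h (Z j i ω).1 (Z j i ω).2 / havg (Z j i ω).1 (Z j i ω).2 * δ (Z j i ω)) μΩ
      ≤ variance (fun ω => (1 / (∑ j, (nvec j : ℝ))) * ∑ j, ∑ i,
        h (Z j i ω).1 (Z j i ω).2 / hj j (Z j i ω).1 (Z j i ω).2 * δ (Z j i ω)) μΩ := by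
  classical
  -- basic notation
  set n : ℝ := ∑ j, (nvec j : ℝ) with hn_def
  have hn0 : (0 : ℝ) < n := by
    rw [hn_def, ← Nat.cast_sum]; exact_mod_cast hn
  have hnj_nonneg : ∀ j : Fin J, (0 : ℝ) ≤ (nvec j : ℝ) := fun j => Nat.cast_nonneg _
  obtain ⟨j₀, hj₀⟩ : ∃ j, nvec j ≠ 0 := by
    by_contra hcon
    push_neg at hcon
    simp [Finset.sum_eq_zero fun j _ => hcon j] at hn
  have havg_pos : ∀ x y, 0 < havg x y := by
    intro x y
    rw [havg_def]
    refine div_pos ?_ hn0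
    refine Finset.sum_pos' (fun j _ => mul_nonneg (hnj_nonneg j) (hj_pos j x y).le) ?_
    exact ⟨j₀, Finset.mem_univ _, mul_pos (by exact_mod_cast Nat.pos_of_ne_zero hj₀)
      (hj_pos j₀ x y)⟩
  have havg_sum : ∀ x y, ∑ j, (nvec j : ℝ) * hj j x y = n * havg x y := by
    intro x y
    rw [havg_def]
    field_simp
  -- the two integrands
  set fbal : X × Y → ℝ := fun z => h z.1 z.2 / havg z.1 z.2 * δ z with hfbal_def
  set fnai : Fin J → X × Y → ℝ := fun j z => h z.1 z.2 / hj j z.1 z.2 * δ z with hfnai_def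
  have havg_meas : Measurable fun z : X × Y => havg z.1 z.2 := by
    have : (fun z : X × Y => havg z.1 z.2)
        = fun z : X × Y => (∑ j, (nvec j : ℝ) * hj j z.1 z.2) / n := by
      funext z; rw [havg_def]
    rw [this]
    exact (Finset.measurable_sum _ fun j _ => (hj_meas j).const_mul _).div_const _
  have fbal_meas : Measurable fbal := (hh_meas.div havg_meas).mul hδ_meas
  have fnai_meas : ∀ j, Measurable (fnai j) :=
    fun j => (hh_meas.div (hj_meas j)).mul hδ_meas
  have fbal_nonneg : ∀ z, 0 ≤ fbal z := fun z =>
    mul_nonneg (div_nonneg (hh_nonneg _ _) (havg_pos _ _).le) (hδ z).1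
  have fnai_nonneg : ∀ j z, 0 ≤ fnai j z := fun j z =>
    mul_nonneg (div_nonneg (hh_nonneg _ _) (hj_pos j _ _).le) (hδ z).1
  -- sums
  set Sbal : Ω → ℝ := fun ω => ∑ j, ∑ i, fbal (Z j i ω) with hSbal_def
  set Snai : Ω → ℝ := fun ω => ∑ j, ∑ i, fnai j (Z j i ω) with hSnai_def
  have hSbal_mem : MemLp Sbal 2 μΩ := by
    have h2 := hL2_bal.const_mul n
    have e : (fun ω => n * ((1 / n) * ∑ j, ∑ i,
        h (Z j i ω).1 (Z j i ω).2 / havg (Z j i ω).1 (Z j i ω).2 * δ (Z j i ω))) = Sbal := by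
      funext ω; field_simp [hSbal_def, hfbal_def]; rw [hSbal_def]; simp only [hfbal_def, div_mul_eq_mul_div]
    rwa [e] at h2
  have hSnai_mem : MemLp Snai 2 μΩ := by
    have h2 := hL2_naive.const_mul n
    have e : (fun ω => n * ((1 / n) * ∑ j, ∑ i,
        h (Z j i ω).1 (Z j i ω).2 / hj j (Z j i ω).1 (Z j i ω).2 * δ (Z j i ω))) = Snai := by
      funext ω; field_simp [hSnai_def, hfnai_def]; rw [hSnai_def]; simp only [hfnai_def, div_mul_eq_mul_div]
    rwa [e] at h2
  -- reduce to variance of sums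
  suffices hmain : variance Sbal μΩ ≤ variance Snai μΩ by
    have e1 : (fun ω => (1 / n) * ∑ j, ∑ i,
        h (Z j i ω).1 (Z j i ω).2 / havg (Z j i ω).1 (Z j i ω).2 * δ (Z j i ω))
        = fun ω => (1 / n) * Sbal ω := rfl
    have e2 : (fun ω => (1 / n) * ∑ j, ∑ i,
        h (Z j i ω).1 (Z j i ω).2 / hj j (Z j i ω).1 (Z j i ω).2 * δ (Z j i ω))
        = fun ω => (1 / n) * Snai ω := rfl
    rw [e1, e2, variance_const_mul, variance_const_mul]
    exact mul_le_mul_of_nonneg_left hmain (sq_nonneg _)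
  -- index over the sigma type
  set I := (j : Fin J) × Fin (nvec j) with hI_def
  set Tbal : I → Ω → ℝ := fun p ω => fbal (Z p.1 p.2 ω) with hTbal_def
  set Tnai : I → Ω → ℝ := fun p ω => fnai p.1 (Z p.1 p.2 ω) with hTnai_def
  have hsigma : ∀ (g : I → ℝ), ∑ p : I, g p = ∑ j, ∑ i, g ⟨j, i⟩ := by
    intro g
    rw [← Finset.univ_sigma_univ, Finset.sum_sigma]
  have hSbal_sum : Sbal = fun ω => ∑ p : I, Tbal p ω := by
    funext ω; rw [hsigma]
  have hSnai_sum : Snai = fun ω => ∑ p : I, Tnai p ω := by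
    funext ω; rw [hsigma]
  -- each term is in L²
  have hTbal_mem : ∀ p : I, MemLp (Tbal p) 2 μΩ := by
    intro p
    refine hSbal_mem.of_le ((fbal_meas.comp (hZ_meas p.1 p.2)).aestronglyMeasurable) ?_
    refine Filter.Eventually.of_forall fun ω => ?_
    have h1 : 0 ≤ Tbal p ω := fbal_nonneg _
    have h2 : Tbal p ω ≤ Sbal ω := by
      rw [hSbal_sum]
      exact Finset.single_le_sum (f := fun q : I => Tbal q ω)
        (fun q _ => fbal_nonneg _) (Finset.mem_univ p)
    rw [Real.norm_eq_abs, Real.norm_eq_abs, abs_of_nonneg h1, abs_of_nonneg (h1.trans h2)]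
    exact h2
  have hTnai_mem : ∀ p : I, MemLp (Tnai p) 2 μΩ := by
    intro p
    refine hSnai_mem.of_le (((fnai_meas p.1).comp (hZ_meas p.1 p.2)).aestronglyMeasurable) ?_
    refine Filter.Eventually.of_forall fun ω => ?_
    have h1 : 0 ≤ Tnai p ω := fnai_nonneg _ _
    have h2 : Tnai p ω ≤ Snai ω := by
      rw [hSnai_sum]
      exact Finset.single_le_sum (f := fun q : I => Tnai q ω)
        (fun q _ => fnai_nonneg _ _) (Finset.mem_univ p)
    rw [Real.norm_eq_abs, Real.norm_eq_abs, abs_of_nonneg h1, abs_of_nonneg (h1.trans h2)]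
    exact h2
  -- variance of the sums
  have hVbal : variance Sbal μΩ = ∑ p : I, variance (Tbal p) μΩ := by
    rw [hSbal_sum]
    have := IndepFun.variance_sum (μ := μΩ) (X := Tbal) (s := Finset.univ)
      (fun p _ => hTbal_mem p)
      (fun p _ q _ hpq => (hind.indepFun hpq).comp fbal_meas fbal_meas)
    rw [← this]
    congr 1
    funext ω
    simp [Finset.sum_apply]
  have hVnai : variance Snai μΩ = ∑ p : I, variance (Tnai p) μΩ := by
    rw [hSnai_sum]
    have := IndepFun.variance_sum (μ := μΩ) (X := Tnai) (s := Finset.univ)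
      (fun p _ => hTnai_mem p)
      (fun p _ q _ hpq => (hind.indepFun hpq).comp (fnai_meas p.1) (fnai_meas q.1))
    rw [← this]
    congr 1
    funext ω
    simp [Finset.sum_apply]
  -- pushforward measure computations
  set ρ : Fin J → X × Y → ℝ := fun j z => hj j z.1 z.2 * Pd z.1 with hρ_def
  have hρ_meas : ∀ j, Measurable (ρ j) := fun j =>
    (hj_meas j).mul (hP_meas.comp measurable_fst)
  have hρ_nonneg : ∀ j z, 0 ≤ ρ j z := fun j z =>
    mul_nonneg (hj_pos j _ _).le (hP_nonneg _)
  have key : ∀ (j : Fin J) (i : Fin (nvec j)) (g : X × Y → ℝ), Measurable g →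
      ∫ ω, g (Z j i ω) ∂μΩ = ∫ z, ρ j z * g z ∂(μ.prod ν) := by
    intro j i g hg
    rw [← integral_map (hZ_meas j i).aemeasurable hg.aestronglyMeasurable]
    have hlaw' : Measure.map (Z j i) μΩ
        = (μ.prod ν).withDensity (fun z => ((Real.toNNReal (ρ j z) : ℝ≥0) : ℝ≥0∞)) :=
      hlaw j i
    rw [hlaw', integral_withDensity_eq_integral_smul (hρ_meas j).real_toNNReal g]
    congr 1
    funext z
    simp only [NNReal.smul_def, smul_eq_mul, Real.coe_toNNReal _ (hρ_nonneg j z)]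
  have keyInt : ∀ (j : Fin J) (i : Fin (nvec j)) (g : X × Y → ℝ), Measurable g →
      Integrable (fun ω => g (Z j i ω)) μΩ →
      Integrable (fun z => ρ j z * g z) (μ.prod ν) := by
    intro j i g hg hint
    have h1 : Integrable g (Measure.map (Z j i) μΩ) :=
      (integrable_map_measure hg.aestronglyMeasurable (hZ_meas j i).aemeasurable).2 hint
    have hlaw' : Measure.map (Z j i) μΩ
        = (μ.prod ν).withDensity (fun z => ((Real.toNNReal (ρ j z) : ℝ≥0) : ℝ≥0∞)) :=
      hlaw j i
    rw [hlaw'] at h1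
    have h2 := (integrable_withDensity_iff_integrable_smul (hρ_meas j).real_toNNReal).1 h1
    refine h2.congr (Filter.Eventually.of_forall fun z => ?_)
    simp only [NNReal.smul_def, smul_eq_mul, Real.coe_toNNReal _ (hρ_nonneg j z)]
  -- the per-logger moments
  set A : Fin J → ℝ := fun j => ∫ z, ρ j z * fbal z ^ 2 ∂(μ.prod ν) with hA_def
  set a : Fin J → ℝ := fun j => ∫ z, ρ j z * fbal z ∂(μ.prod ν) with ha_def
  set B : Fin J → ℝ := fun j => ∫ z, ρ j z * fnai j z ^ 2 ∂(μ.prod ν) with hB_def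
  set m : ℝ := ∫ z : X × Y, h z.1 z.2 * Pd z.1 * δ z ∂(μ.prod ν) with hm_def
  -- per-term variances
  have hvarTbal : ∀ p : I, variance (Tbal p) μΩ = A p.1 - (a p.1) ^ 2 := by
    intro p
    rw [variance_eq_sub (hTbal_mem p)]
    have e1 : μΩ[(Tbal p) ^ 2] = A p.1 := by
      have : (Tbal p) ^ 2 = fun ω => (fun z => fbal z ^ 2) (Z p.1 p.2 ω) := by
        funext ω; simp [hTbal_def]
      rw [this, key p.1 p.2 _ (fbal_meas.pow_const 2)]
    have e2 : μΩ[Tbal p] = a p.1 := key p.1 p.2 _ fbal_meas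
    rw [e1, e2]
  have hvarTnai : ∀ p : I, variance (Tnai p) μΩ = B p.1 - m ^ 2 := by
    intro p
    rw [variance_eq_sub (hTnai_mem p)]
    have e1 : μΩ[(Tnai p) ^ 2] = B p.1 := by
      have : (Tnai p) ^ 2 = fun ω => (fun z => fnai p.1 z ^ 2) (Z p.1 p.2 ω) := by
        funext ω; simp [hTnai_def]
      rw [this, key p.1 p.2 _ ((fnai_meas p.1).pow_const 2)]
    have e2 : μΩ[Tnai p] = m := by
      rw [key p.1 p.2 _ (fnai_meas p.1)]
      refine integral_congr_ae (Filter.Eventually.of_forall fun z => ?_)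
      have hne : hj p.1 z.1 z.2 ≠ 0 := (hj_pos p.1 z.1 z.2).ne'
      simp only [hρ_def, hfnai_def]
      field_simp
    rw [e1, e2]
  -- sum the variances over the sigma type
  have hVbal' : variance Sbal μΩ
      = (∑ j, (nvec j : ℝ) * A j) - ∑ j, (nvec j : ℝ) * (a j) ^ 2 := by
    rw [hVbal, hsigma]
    rw [← Finset.sum_sub_distrib]
    refine Finset.sum_congr rfl fun j _ => ?_
    rw [Finset.sum_congr rfl fun i _ => hvarTbal ⟨j, i⟩]
    simp [Finset.sum_const, mul_sub]
  have hVnai' : variance Snai μΩ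
      = (∑ j, (nvec j : ℝ) * B j) - ∑ j, (nvec j : ℝ) * m ^ 2 := by
    rw [hVnai, hsigma]
    rw [← Finset.sum_sub_distrib]
    refine Finset.sum_congr rfl fun j _ => ?_
    rw [Finset.sum_congr rfl fun i _ => hvarTnai ⟨j, i⟩]
    simp [Finset.sum_const, mul_sub]
  rw [hVbal', hVnai']
  -- integrability of weighted integrands
  have hIwA : ∀ j : Fin J,
      Integrable (fun z => (nvec j : ℝ) * (ρ j z * fbal z ^ 2)) (μ.prod ν) := by
    intro j
    rcases eq_or_ne (nvec j) 0 with h0 | h0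
    · simpa [h0] using integrable_zero (X × Y) ℝ (μ.prod ν)
    · refine (keyInt j ⟨0, Nat.pos_of_ne_zero h0⟩ _ (fbal_meas.pow_const 2) ?_).const_mul _
      exact (hTbal_mem ⟨j, ⟨0, Nat.pos_of_ne_zero h0⟩⟩).integrable_sq
  have hIwB : ∀ j : Fin J,
      Integrable (fun z => (nvec j : ℝ) * (ρ j z * fnai j z ^ 2)) (μ.prod ν) := by
    intro j
    rcases eq_or_ne (nvec j) 0 with h0 | h0
    · simpa [h0] using integrable_zero (X × Y) ℝ (μ.prod ν)
    · refine (keyInt j ⟨0, Nat.pos_of_ne_zero h0⟩ _ ((fnai_meas j).pow_const 2) ?_).const_mul _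
      exact (hTnai_mem ⟨j, ⟨0, Nat.pos_of_ne_zero h0⟩⟩).integrable_sq
  have hIwa : ∀ j : Fin J,
      Integrable (fun z => (nvec j : ℝ) * (ρ j z * fbal z)) (μ.prod ν) := by
    intro j
    rcases eq_or_ne (nvec j) 0 with h0 | h0
    · simpa [h0] using integrable_zero (X × Y) ℝ (μ.prod ν)
    · refine (keyInt j ⟨0, Nat.pos_of_ne_zero h0⟩ _ fbal_meas ?_).const_mul _
      exact (hTbal_mem ⟨j, ⟨0, Nat.pos_of_ne_zero h0⟩⟩).integrable one_le_two
  -- first inequality: second moments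
  have part1 : ∑ j, (nvec j : ℝ) * A j ≤ ∑ j, (nvec j : ℝ) * B j := by
    have e1 : ∑ j, (nvec j : ℝ) * A j
        = ∫ z, ∑ j, (nvec j : ℝ) * (ρ j z * fbal z ^ 2) ∂(μ.prod ν) := by
      rw [integral_finset_sum _ fun j _ => hIwA j]
      exact Finset.sum_congr rfl fun j _ => (integral_const_mul _ _).symm
    have e2 : ∑ j, (nvec j : ℝ) * B j
        = ∫ z, ∑ j, (nvec j : ℝ) * (ρ j z * fnai j z ^ 2) ∂(μ.prod ν) := by
      rw [integral_finset_sum _ fun j _ => hIwB j]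
      exact Finset.sum_congr rfl fun j _ => (integral_const_mul _ _).symm
    rw [e1, e2]
    refine integral_mono (integrable_finset_sum _ fun j _ => hIwA j)
      (integrable_finset_sum _ fun j _ => hIwB j) fun z => ?_
    have hhz : 0 < havg z.1 z.2 := havg_pos _ _
    set S : ℝ := ∑ j, (nvec j : ℝ) / hj j z.1 z.2 with hS
    have hCS : n ^ 2 ≤ (n * havg z.1 z.2) * S := by
      have hcs := Finset.sum_sq_le_sum_mul_sum_of_sq_eq_mul Finset.univ
        (f := fun j => (nvec j : ℝ) * hj j z.1 z.2) (g := fun j => (nvec j : ℝ) / hj j z.1 z.2)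
        (r := fun j => (nvec j : ℝ))
        (fun j _ => mul_nonneg (hnj_nonneg j) (hj_pos j _ _).le)
        (fun j _ => div_nonneg (hnj_nonneg j) (hj_pos j _ _).le)
        (fun j _ => by
          have hne : hj j z.1 z.2 ≠ 0 := (hj_pos j z.1 z.2).ne'
          field_simp)
      calc n ^ 2 = (∑ j, (nvec j : ℝ)) ^ 2 := by rw [hn_def]
        _ ≤ (∑ j, (nvec j : ℝ) * hj j z.1 z.2) * S := hcs
        _ = (n * havg z.1 z.2) * S := by rw [havg_sum]
    have hkey : n / havg z.1 z.2 ≤ S := by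
      rw [div_le_iff₀ hhz]
      have h' : n * n ≤ n * (S * havg z.1 z.2) := by nlinarith [hCS]
      exact le_of_mul_le_mul_left h' hn0
    have hD : 0 ≤ Pd z.1 * (h z.1 z.2 * δ z) ^ 2 := mul_nonneg (hP_nonneg _) (sq_nonneg _)
    have eL : ∑ j, (nvec j : ℝ) * (ρ j z * fbal z ^ 2)
        = (n / havg z.1 z.2) * (Pd z.1 * (h z.1 z.2 * δ z) ^ 2) := by
      have e : ∀ j : Fin J, (nvec j : ℝ) * (ρ j z * fbal z ^ 2)
          = ((nvec j : ℝ) * hj j z.1 z.2) * (Pd z.1 * fbal z ^ 2) := by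
        intro j; simp only [hρ_def]; ring
      rw [Finset.sum_congr rfl fun j _ => e j, ← Finset.sum_mul, havg_sum]
      simp only [hfbal_def]
      field_simp
    have eR : ∑ j, (nvec j : ℝ) * (ρ j z * fnai j z ^ 2)
        = S * (Pd z.1 * (h z.1 z.2 * δ z) ^ 2) := by
      rw [hS, Finset.sum_mul]
      refine Finset.sum_congr rfl fun j _ => ?_
      have hne : hj j z.1 z.2 ≠ 0 := (hj_pos j z.1 z.2).ne'
      simp only [hρ_def, hfnai_def]
      field_simp
    calc ∑ j, (nvec j : ℝ) * (ρ j z * fbal z ^ 2)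
        = (n / havg z.1 z.2) * (Pd z.1 * (h z.1 z.2 * δ z) ^ 2) := eL
      _ ≤ S * (Pd z.1 * (h z.1 z.2 * δ z) ^ 2) := mul_le_mul_of_nonneg_right hkey hD
      _ = ∑ j, (nvec j : ℝ) * (ρ j z * fnai j z ^ 2) := eR.symm
  -- second inequality: squared means
  have hsum_a : ∑ j, (nvec j : ℝ) * a j = n * m := by
    have e1 : ∑ j, (nvec j : ℝ) * a j
        = ∫ z, ∑ j, (nvec j : ℝ) * (ρ j z * fbal z) ∂(μ.prod ν) := by
      rw [integral_finset_sum _ fun j _ => hIwa j]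
      exact Finset.sum_congr rfl fun j _ => (integral_const_mul _ _).symm
    have e2 : ∀ z : X × Y, ∑ j, (nvec j : ℝ) * (ρ j z * fbal z)
        = n * (h z.1 z.2 * Pd z.1 * δ z) := by
      intro z
      have hhz : havg z.1 z.2 ≠ 0 := (havg_pos _ _).ne'
      have e : ∀ j : Fin J, (nvec j : ℝ) * (ρ j z * fbal z)
          = ((nvec j : ℝ) * hj j z.1 z.2) * (Pd z.1 * fbal z) := by
        intro j; simp only [hρ_def]; ring
      rw [Finset.sum_congr rfl fun j _ => e j, ← Finset.sum_mul, havg_sum]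
      simp only [hfbal_def]
      field_simp
    rw [e1, integral_congr_ae (Filter.Eventually.of_forall e2), integral_const_mul, hm_def]
  have part2 : ∑ j, (nvec j : ℝ) * m ^ 2 ≤ ∑ j, (nvec j : ℝ) * a j ^ 2 := by
    have hCS2 := Finset.sum_sq_le_sum_mul_sum_of_sq_eq_mul Finset.univ
      (f := fun j : Fin J => (nvec j : ℝ)) (g := fun j => (nvec j : ℝ) * a j ^ 2)
      (r := fun j => (nvec j : ℝ) * a j)
      (fun j _ => hnj_nonneg j) (fun j _ => mul_nonneg (hnj_nonneg j) (sq_nonneg _))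
      (fun j _ => by ring)
    rw [hsum_a, ← hn_def] at hCS2
    have hL : ∑ j, (nvec j : ℝ) * m ^ 2 = n * m ^ 2 := by
      rw [← Finset.sum_mul, ← hn_def]
    rw [hL]
    have h' : n * (n * m ^ 2) ≤ n * ∑ j, (nvec j : ℝ) * a j ^ 2 := by
      calc n * (n * m ^ 2) = (n * m) ^ 2 := by ring
        _ ≤ n * ∑ j, (nvec j : ℝ) * a j ^ 2 := hCS2
    exact le_of_mul_le_mul_left h' hn0
  exact sub_le_sub part1 part2
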